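/- arXiv:2002.03724 — 5 statements merged into one kernel-verified Lean document; each statement's English description precedes it below -/
import Mathlib

section
/- For any weak (m,n,ρ)-AMD code with equiprobable sources and equiprobable encoding, ρ ≥ a(m-1)/(m(n-1)), where a = Σ_{s ∈ S} |G_s|. -/
open Finset

/-- For any weak `(m,n,ρ)`-AMD code with equiprobable sources and equiprobable
encoding (source set `S` of size `m`, group `G` of order `n`, pairwise disjoint
nonempty valid-encoding sets `G_s`), we have `ρ ≥ a(m-1)/(m(n-1))` where
`a = ∑_s |G_s|`. -/
theorem stmt_7 {S G : Type} [Fintype S] [DecidableEq S] [Nonempty S]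
    [AddCommGroup G] [Fintype G] [DecidableEq G] [Nontrivial G]
    (Gs : S → Finset G) (hne : ∀ s, (Gs s).Nonempty)
    (hdisj : ∀ s s', s ≠ s' → Disjoint (Gs s) (Gs s')) (ρ : ℚ)
    (hsec : ∀ Δ : G, Δ ≠ 0 →
      (1 / (Fintype.card S : ℚ)) *
          ∑ s : S, (1 / ((Gs s).card : ℚ)) *
            ((Gs s).filter fun g => ∃ s', s' ≠ s ∧ g + Δ ∈ Gs s').card ≤ ρ) :
    (∑ s : S, ((Gs s).card : ℚ)) * ((Fintype.card S : ℚ) - 1) /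
        ((Fintype.card S : ℚ) * ((Fintype.card G : ℚ) - 1)) ≤ ρ := by
  classical
  set m : ℚ := (Fintype.card S : ℚ) with hm_def
  set A : ℚ := ∑ s : S, ((Gs s).card : ℚ) with hA_def
  have hm : 0 < m := by rw [hm_def]; exact_mod_cast Fintype.card_pos (α := S)
  have hn : (2 : ℚ) ≤ (Fintype.card G : ℚ) := by exact_mod_cast Fintype.one_lt_card (α := G)
  set T : S → Finset G := fun s => (Finset.univ.erase s).biUnion Gs with hT_def
  have hTmem : ∀ s g, g ∈ T s ↔ ∃ s', s' ≠ s ∧ g ∈ Gs s' := by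
    intro s g
    simp [hT_def, Finset.mem_biUnion, Finset.mem_erase]
  have hgT : ∀ s g, g ∈ Gs s → g ∉ T s := by
    intro s g hg hgT
    obtain ⟨s', hs', hg'⟩ := (hTmem s g).1 hgT
    exact (Finset.disjoint_left.1 (hdisj s' s hs') hg') hg
  -- key counting lemma
  have key : ∀ s : S, ∀ g ∈ Gs s,
      ((Finset.univ.erase (0:G)).filter (fun Δ => g + Δ ∈ T s)).card = (T s).card := by
    intro s g hg
    apply Finset.card_bij (fun Δ _ => g + Δ)
    · intro Δ hΔ
      exact (Finset.mem_filter.1 hΔ).2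
    · intro a ha b hb h
      exact add_left_cancel h
    · intro h hh
      refine ⟨h - g, ?_, by abel⟩
      rw [Finset.mem_filter]
      constructor
      · rw [Finset.mem_erase]
        refine ⟨?_, Finset.mem_univ _⟩
        intro h0
        have : h = g := by
          have := sub_eq_zero.1 h0
          exact this
        exact hgT s g hg (this ▸ hh)
      · simpa using hh
  have hTcard : ∀ s, ((T s).card : ℚ) = A - ((Gs s).card : ℚ) := by
    intro s
    have h1 : (T s).card = ∑ s' ∈ Finset.univ.erase s, (Gs s').card := by
      apply Finset.card_biUnion
      intro x hx y hy hxy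
      exact hdisj x y hxy
    rw [h1]
    push_cast
    rw [Finset.sum_erase_eq_sub (Finset.mem_univ s)]
  -- per-s sum over Δ
  have hsum_s : ∀ s : S, ∑ Δ ∈ Finset.univ.erase (0:G),
      (((Gs s).filter fun g => ∃ s', s' ≠ s ∧ g + Δ ∈ Gs s').card : ℚ)
      = ((Gs s).card : ℚ) * ((T s).card : ℚ) := by
    intro s
    have hfil : ∀ Δ : G, ((Gs s).filter fun g => ∃ s', s' ≠ s ∧ g + Δ ∈ Gs s')
        = ((Gs s).filter fun g => g + Δ ∈ T s) := by
      intro Δ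
      apply Finset.filter_congr
      intro g _
      simp [hTmem]
    calc ∑ Δ ∈ Finset.univ.erase (0:G),
        (((Gs s).filter fun g => ∃ s', s' ≠ s ∧ g + Δ ∈ Gs s').card : ℚ)
        = ∑ Δ ∈ Finset.univ.erase (0:G), ∑ g ∈ Gs s, (if g + Δ ∈ T s then (1:ℚ) else 0) := by
          refine Finset.sum_congr rfl fun Δ _ => ?_
          rw [hfil]
          rw [Finset.card_filter]
          push_cast
          rfl
      _ = ∑ g ∈ Gs s, ∑ Δ ∈ Finset.univ.erase (0:G), (if g + Δ ∈ T s then (1:ℚ) else 0) :=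
          Finset.sum_comm
      _ = ∑ g ∈ Gs s, ((T s).card : ℚ) := by
          refine Finset.sum_congr rfl fun g hg => ?_
          rw [Finset.sum_boole]
          exact_mod_cast key s g hg
      _ = ((Gs s).card : ℚ) * ((T s).card : ℚ) := by
          rw [Finset.sum_const, nsmul_eq_mul]
  -- total sum over Δ
  have hc : ∀ s : S, ((Gs s).card : ℚ) ≠ 0 := by
    intro s
    have := (hne s).card_pos
    positivity
  have htotal : ∑ Δ ∈ Finset.univ.erase (0:G),
      ((1 / m) * ∑ s : S, (1 / ((Gs s).card : ℚ)) *
        ((Gs s).filter fun g => ∃ s', s' ≠ s ∧ g + Δ ∈ Gs s').card)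
      = A * (m - 1) / m := by
    rw [← Finset.mul_sum, Finset.sum_comm]
    have : ∀ s : S, ∑ Δ ∈ Finset.univ.erase (0:G),
        (1 / ((Gs s).card : ℚ)) *
        (((Gs s).filter fun g => ∃ s', s' ≠ s ∧ g + Δ ∈ Gs s').card : ℚ)
        = A - ((Gs s).card : ℚ) := by
      intro s
      rw [← Finset.mul_sum, hsum_s s, hTcard s]
      field_simp
    rw [Finset.sum_congr rfl fun s _ => this s]
    rw [Finset.sum_sub_distrib, Finset.sum_const, ← hA_def]
    simp only [Finset.card_univ, nsmul_eq_mul]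
    rw [← hm_def]
    field_simp
  -- each term bounded by ρ
  have hub : ∑ Δ ∈ Finset.univ.erase (0:G),
      ((1 / m) * ∑ s : S, (1 / ((Gs s).card : ℚ)) *
        ((Gs s).filter fun g => ∃ s', s' ≠ s ∧ g + Δ ∈ Gs s').card)
      ≤ ((Fintype.card G : ℚ) - 1) * ρ := by
    have hcard : ((Finset.univ.erase (0:G)).card : ℚ) = (Fintype.card G : ℚ) - 1 := by
      rw [Finset.card_erase_of_mem (Finset.mem_univ _), Finset.card_univ]
      have : 1 ≤ Fintype.card G := Fintype.card_pos
      push_cast [Nat.cast_sub this]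
      ring
    calc _ ≤ ∑ _Δ ∈ Finset.univ.erase (0:G), ρ := by
          refine Finset.sum_le_sum fun Δ hΔ => ?_
          exact hsec Δ (Finset.mem_erase.1 hΔ).1
      _ = ((Fintype.card G : ℚ) - 1) * ρ := by
          rw [Finset.sum_const, nsmul_eq_mul, hcard]
  have hmain : A * (m - 1) / m ≤ ((Fintype.card G : ℚ) - 1) * ρ := htotal ▸ hub
  have hn1 : (0:ℚ) < (Fintype.card G : ℚ) - 1 := by linarith
  rw [div_le_iff₀ (by positivity)]
  rw [div_le_iff₀ hm] at hmain
  nlinarith [hmain, hm, hn1]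
end

section
/- For any t-regular weak (m,n,ρ)-AMD code, ρ ≥ ⌈t² m (m-1)/(n-1)⌉ / (t m). -/
set_option maxRecDepth 8000
set_option maxHeartbeats 2000000


open Finset

/-- For any `t`-regular weak `(m,n,ρ)`-AMD code,
`ρ ≥ ⌈t² m (m-1)/(n-1)⌉ / (t m)`. -/
theorem stmt_8 {S G : Type} [Fintype S] [DecidableEq S] [Nonempty S]
    [AddCommGroup G] [Fintype G] [DecidableEq G] [Nontrivial G]
    (t : ℕ) (ht : 0 < t) (Gs : S → Finset G) (hcard : ∀ s, (Gs s).card = t)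
    (hdisj : ∀ s s', s ≠ s' → Disjoint (Gs s) (Gs s')) (ρ : ℚ)
    (hsec : ∀ Δ : G, Δ ≠ 0 →
      (1 / ((t : ℚ) * Fintype.card S)) *
          ∑ s : S, (((Gs s).filter fun g => ∃ s', s' ≠ s ∧ g + Δ ∈ Gs s').card : ℚ) ≤ ρ) :
    (⌈((t : ℚ) ^ 2 * Fintype.card S * ((Fintype.card S : ℚ) - 1)) /
          ((Fintype.card G : ℚ) - 1)⌉ : ℚ) / ((t : ℚ) * Fintype.card S) ≤ ρ := by
  classical
  set m := Fintype.card S with hm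
  set n := Fintype.card G with hn
  have hm1 : 1 ≤ m := Fintype.card_pos
  have hn2 : 2 ≤ n := Fintype.one_lt_card
  set f : G → ℕ := fun Δ => ∑ s : S, ((Gs s).filter fun g => ∃ s', s' ≠ s ∧ g + Δ ∈ Gs s').card
    with hf
  -- total sum over all Δ
  have hsum : ∑ Δ : G, f Δ = t ^ 2 * m * (m - 1) := by
    rw [Finset.sum_comm]
    have hstep : ∀ s : S,
        ∑ Δ : G, ((Gs s).filter fun g => ∃ s', s' ≠ s ∧ g + Δ ∈ Gs s').card
          = t * ((m - 1) * t) := by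
      intro s
      have hT : ((univ.erase s).biUnion Gs).card = (m - 1) * t := by
        rw [Finset.card_biUnion (fun a _ b _ hab => hdisj a b hab)]
        simp [hcard, Finset.card_erase_of_mem, hm, Finset.sum_const, mul_comm]
      calc ∑ Δ : G, ((Gs s).filter fun g => ∃ s', s' ≠ s ∧ g + Δ ∈ Gs s').card
          = ∑ Δ : G, ∑ g ∈ Gs s, if ∃ s', s' ≠ s ∧ g + Δ ∈ Gs s' then 1 else 0 := by
            simp only [Finset.card_filter]
        _ = ∑ g ∈ Gs s, ∑ Δ : G, if ∃ s', s' ≠ s ∧ g + Δ ∈ Gs s' then 1 else 0 :=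
            Finset.sum_comm
        _ = ∑ g ∈ Gs s, (univ.filter fun Δ : G => ∃ s', s' ≠ s ∧ g + Δ ∈ Gs s').card := by
            simp only [Finset.card_filter]
        _ = ∑ g ∈ Gs s, ((univ.erase s).biUnion Gs).card := by
            refine Finset.sum_congr rfl fun g _ => ?_
            refine Finset.card_bij' (fun Δ _ => g + Δ) (fun h _ => h - g) ?_ ?_ ?_ ?_
            · intro Δ hΔ
              simp only [Finset.mem_filter, Finset.mem_univ, true_and] at hΔ
              obtain ⟨s', hs', hmem⟩ := hΔ
              exact Finset.mem_biUnion.mpr ⟨s', Finset.mem_erase.mpr ⟨hs', Finset.mem_univ _⟩, hmem⟩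
            · intro h hh
              simp only [Finset.mem_filter, Finset.mem_univ, true_and]
              obtain ⟨s', hs', hmem⟩ := Finset.mem_biUnion.mp hh
              exact ⟨s', (Finset.mem_erase.mp hs').1, by simpa using hmem⟩
            · intro Δ _; exact add_sub_cancel_left g Δ
            · intro h _; exact add_sub_cancel g h
        _ = t * ((m - 1) * t) := by rw [Finset.sum_const, hcard, hT, smul_eq_mul]
    rw [Finset.sum_congr rfl fun s _ => hstep s, Finset.sum_const, Finset.card_univ, ← hm,
      smul_eq_mul]
    ring
  have hf0 : f 0 = 0 := by
    rw [hf]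
    refine Finset.sum_eq_zero fun s _ => ?_
    rw [Finset.card_eq_zero, Finset.filter_eq_empty_iff]
    rintro g hg ⟨s', hs', hmem⟩
    rw [add_zero] at hmem
    exact absurd hmem (Finset.disjoint_left.mp (hdisj s s' (Ne.symm hs')) hg)
  have hsum' : ∑ Δ ∈ univ.erase (0 : G), f Δ = t ^ 2 * m * (m - 1) := by
    rw [Finset.sum_erase _ hf0, hsum]
  -- find a good Δ
  have hncard : (univ.erase (0 : G)).card = n - 1 := by
    rw [Finset.card_erase_of_mem (Finset.mem_univ _), Finset.card_univ, hn]
  have hne : (univ.erase (0 : G)).Nonempty := by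
    obtain ⟨x, hx⟩ := exists_ne (0 : G)
    exact ⟨x, Finset.mem_erase.mpr ⟨hx, Finset.mem_univ _⟩⟩
  have hn1pos : (0 : ℚ) < (n : ℚ) - 1 := by
    have : (2 : ℚ) ≤ n := by exact_mod_cast hn2
    linarith
  set q : ℚ := ((t : ℚ) ^ 2 * m * ((m : ℚ) - 1)) / ((n : ℚ) - 1) with hq
  have hNQ : ((t ^ 2 * m * (m - 1) : ℕ) : ℚ) = (t : ℚ) ^ 2 * m * ((m : ℚ) - 1) := by
    have : ((m - 1 : ℕ) : ℚ) = (m : ℚ) - 1 := by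
      have := hm1; push_cast [Nat.cast_sub hm1]; ring
    push_cast [this]; ring
  have hexists : ∃ Δ ∈ univ.erase (0 : G), q ≤ (f Δ : ℚ) := by
    by_contra hcon
    push_neg at hcon
    have hlt : ∑ Δ ∈ univ.erase (0 : G), (f Δ : ℚ)
        < ∑ Δ ∈ univ.erase (0 : G), q := by
      exact Finset.sum_lt_sum_of_nonempty hne fun Δ hΔ => hcon Δ hΔ
    rw [Finset.sum_const, hncard, nsmul_eq_mul] at hlt
    have hcast : ((n - 1 : ℕ) : ℚ) = (n : ℚ) - 1 := by
      push_cast [Nat.cast_sub (le_trans one_le_two hn2)]; ring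
    rw [hcast, hq, mul_div_cancel₀ _ (ne_of_gt hn1pos)] at hlt
    have : ∑ Δ ∈ univ.erase (0 : G), (f Δ : ℚ) = (t : ℚ) ^ 2 * m * ((m : ℚ) - 1) := by
      rw [← Nat.cast_sum, hsum', hNQ]
    linarith [hlt, this.ge]
  obtain ⟨Δ, hΔmem, hΔ⟩ := hexists
  have hΔ0 : Δ ≠ 0 := (Finset.mem_erase.mp hΔmem).1
  have hceil : (⌈q⌉ : ℚ) ≤ (f Δ : ℚ) := by
    have : ⌈q⌉ ≤ (f Δ : ℤ) := Int.ceil_le.mpr (by exact_mod_cast hΔ)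
    exact_mod_cast this
  have htm : (0 : ℚ) < (t : ℚ) * m := by
    have h1 : (0 : ℚ) < (t : ℚ) := by exact_mod_cast ht
    have h2 : (0 : ℚ) < (m : ℚ) := by exact_mod_cast hm1
    positivity
  have hsecΔ := hsec Δ hΔ0
  have hfc : ∑ s : S, (((Gs s).filter fun g => ∃ s', s' ≠ s ∧ g + Δ ∈ Gs s').card : ℚ)
      = (f Δ : ℚ) := by rw [hf]; push_cast; ring
  rw [hfc] at hsecΔ
  calc (⌈q⌉ : ℚ) / ((t : ℚ) * m) ≤ (f Δ : ℚ) / ((t : ℚ) * m) := by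
        gcongr
    _ = (1 / ((t : ℚ) * m)) * (f Δ : ℚ) := by ring
    _ ≤ ρ := hsecΔ
end

section
/- For any strong (m,n,ρ)-AMD code and any source s, the maximal success probability of an adversary knowing s is at least 1/|G_s|: there exists a nonzero Δ ∈ G with Pr(dec(E(s)+Δ) ∉ {s,⊥}) ≥ 1/|G_s|, provided m ≥ 2 and the encoding of s is uniform on G_s. -/
open Finset

/-- For a strong AMD code with at least two sources, disjoint nonempty
valid-encoding sets `G_s` and encoding of `s` uniform on `G_s`, for every source
`s` there is a nonzero offset `Δ` whose success probability against `s` is at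
least `1/|G_s|`. -/
theorem stmt_9 {S G : Type} [Fintype S] [DecidableEq S]
    [AddCommGroup G] [Fintype G] [DecidableEq G]
    (hm : 2 ≤ Fintype.card S)
    (Gs : S → Finset G) (hne : ∀ s, (Gs s).Nonempty)
    (hdisj : ∀ s s', s ≠ s' → Disjoint (Gs s) (Gs s')) (s : S) :
    ∃ Δ : G, Δ ≠ 0 ∧
      (1 : ℚ) / ((Gs s).card : ℚ) ≤
        (1 / ((Gs s).card : ℚ)) *
          (((Gs s).filter fun g => ∃ s', s' ≠ s ∧ g + Δ ∈ Gs s').card : ℚ) := by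
  obtain ⟨s', hs'⟩ := Fintype.exists_ne_of_one_lt_card (by omega) s
  obtain ⟨g, hg⟩ := hne s
  obtain ⟨g', hg'⟩ := hne s'
  refine ⟨g' - g, ?_, ?_⟩
  · intro h
    have : g' = g := by
      have := sub_eq_zero.mp h; exact this
    subst this
    simpa using (hdisj s s' (Ne.symm hs')).le_bot (by simp [hg, hg'] : g' ∈ Gs s ⊓ Gs s')
  · have hmem : g ∈ (Gs s).filter fun x => ∃ t, t ≠ s ∧ x + (g' - g) ∈ Gs t := by
      refine mem_filter.mpr ⟨hg, s', hs', ?_⟩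
      simpa using hg'
    have hcard : (1 : ℚ) ≤ (((Gs s).filter fun x => ∃ t, t ≠ s ∧ x + (g' - g) ∈ Gs t).card : ℚ) := by
      exact_mod_cast card_pos.mpr ⟨g, hmem⟩
    have hpos : (0 : ℚ) < ((Gs s).card : ℚ) := by
      exact_mod_cast card_pos.mpr (hne s)
    calc (1:ℚ) / ((Gs s).card : ℚ) = (1 / ((Gs s).card : ℚ)) * 1 := by ring
    _ ≤ _ := by
        apply mul_le_mul_of_nonneg_left hcard
        positivity
end

section
/- Let q be a power of a prime p and t > 0 with p not dividing t+2. The function h : F_q^t × F_q → F_q given by h(S,x) = x^{t+2} + Σ_{i=1}^t s_i x^i has nonlinearity P_h ≤ (t+1)/q, i.e., for every (a, Δ) ∈ F_q^t × F_q with (a,Δ) ≠ (0,0) and every b ∈ F_q, |{(S,x) : h(S+a, x+Δ) - h(S,x) = b}| ≤ (t+1) q^t. -/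
open Finset


open Polynomial

lemma affine_count {K : Type} [Field K] [Fintype K] [DecidableEq K] {t : ℕ} (c : Fin t → K)
    (j : Fin t) (hc : c j ≠ 0) (d : K) :
    (univ.filter fun S : Fin t → K => ∑ i, S i * c i = d).card
      ≤ Fintype.card K ^ (t - 1) := by
  have h := Finset.card_le_card_of_injOn
    (f := fun (S : Fin t → K) (i : {i : Fin t // i ≠ j}) => S i)
    (s := univ.filter fun S : Fin t → K => ∑ i, S i * c i = d)
    (t := (univ : Finset ({i : Fin t // i ≠ j} → K)))
    (fun _ _ => mem_univ _) ?_
  · calc _ ≤ (univ : Finset ({i : Fin t // i ≠ j} → K)).card := h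
      _ = Fintype.card K ^ (t - 1) := by
        rw [Finset.card_univ, Fintype.card_fun]
        congr 1
        simp [Fintype.card_subtype_compl, Fintype.card_subtype_eq]
  · intro S hS S' hS' hEq
    simp only [mem_coe, mem_filter, mem_univ, true_and] at hS hS'
    have hoff : ∀ i : Fin t, i ≠ j → S i = S' i := fun i hi =>
      congrFun hEq ⟨i, hi⟩
    have hsum : ∑ i ∈ univ.erase j, S i * c i = ∑ i ∈ univ.erase j, S' i * c i :=
      Finset.sum_congr rfl fun i hi => by rw [hoff i (Finset.mem_erase.mp hi).1]
    have h1 : S j * c j = S' j * c j := by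
      have e1 := Finset.add_sum_erase univ (fun i => S i * c i) (mem_univ j)
      have e2 := Finset.add_sum_erase univ (fun i => S' i * c i) (mem_univ j)
      rw [hS] at e1; rw [hS'] at e2
      rw [hsum] at e1
      exact add_right_cancel (e1.trans e2.symm)
    have : S j = S' j := mul_right_cancel₀ hc h1
    funext i
    by_cases hij : i = j
    · rw [hij]; exact this
    · exact hoff i hij

lemma root_count {K : Type} [Field K] [Fintype K] [DecidableEq K] {t : ℕ} (a : Fin t → K)
    (j : Fin t) (hj : a j ≠ 0) (b : K) :
    (univ.filter fun x : K => ∑ i, a i * x ^ ((i : ℕ) + 1) = b).card ≤ t + 1 := by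
  set P : Polynomial K := (∑ i : Fin t, C (a i) * X ^ ((i : ℕ) + 1)) - C b with hP
  have hcoeff : P.coeff ((j : ℕ) + 1) = a j := by
    rw [hP, Polynomial.coeff_sub, Polynomial.finset_sum_coeff]
    have : ∀ i : Fin t, (C (a i) * X ^ ((i : ℕ) + 1)).coeff ((j : ℕ) + 1)
        = if i = j then a i else 0 := by
      intro i
      rw [Polynomial.coeff_C_mul, Polynomial.coeff_X_pow]
      by_cases h : i = j
      · simp [h]
      · have hne : ((j : ℕ) + 1) ≠ ((i : ℕ) + 1) := by
          simp [Fin.val_eq_val]; exact fun h' => h h'.symm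
        simp [hne, h]; intro h'; exact absurd (Fin.ext h').symm h
    rw [Finset.sum_congr rfl fun i _ => this i]
    simp [Polynomial.coeff_C]
  have hP0 : P ≠ 0 := fun h => hj (by rw [← hcoeff, h, Polynomial.coeff_zero])
  have hdeg : P.natDegree ≤ t + 1 := by
    apply (Polynomial.natDegree_sub_le _ _).trans
    simp only [Polynomial.natDegree_C, max_le_iff]
    constructor
    · apply Polynomial.natDegree_sum_le_of_forall_le
      intro i _
      exact (Polynomial.natDegree_C_mul_le _ _).trans
        ((Polynomial.natDegree_X_pow _).le.trans (by omega))
    · omega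
  calc (univ.filter fun x : K => ∑ i, a i * x ^ ((i : ℕ) + 1) = b).card
      ≤ P.roots.toFinset.card := by
        apply Finset.card_le_card
        intro x hx
        simp only [mem_filter, mem_univ, true_and] at hx
        rw [Multiset.mem_toFinset, Polynomial.mem_roots hP0]
        simp [Polynomial.IsRoot, hP, Polynomial.eval_finset_sum, hx]
    _ ≤ P.roots.card := Multiset.toFinset_card_le _
    _ ≤ P.natDegree := Polynomial.card_roots' P
    _ ≤ t + 1 := hdeg

lemma key_id {K : Type} [Field K] {t : ℕ} (S a : Fin t → K) (x y : K) :
    (y ^ (t + 2) + ∑ i : Fin t, (S i + a i) * y ^ ((i : ℕ) + 1)) -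
        (x ^ (t + 2) + ∑ i : Fin t, S i * x ^ ((i : ℕ) + 1))
      = (∑ i : Fin t, S i * (y ^ ((i : ℕ) + 1) - x ^ ((i : ℕ) + 1))) +
          (y ^ (t + 2) - x ^ (t + 2) + ∑ i : Fin t, a i * y ^ ((i : ℕ) + 1)) := by
  simp only [mul_sub, add_mul, Finset.sum_add_distrib, Finset.sum_sub_distrib]
  ring


/-- Let `q = p^k`, `t > 0`, `p ∤ t+2`, and `h(S,x) = x^(t+2) + ∑_{i=1}^t S_i x^i`
on `F_q^t × F_q`. Then `P_h ≤ (t+1)/q`: for every `(a,Δ) ≠ (0,0)` and every `b`,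
the number of `(S,x)` with `h(S+a, x+Δ) - h(S,x) = b` is at most `(t+1) q^t`. -/
theorem stmt_16 {K : Type} [Field K] [Fintype K] [DecidableEq K]
    (p : ℕ) [Fact p.Prime] [CharP K p] (t : ℕ) (ht : 0 < t) (hp : ¬ p ∣ (t + 2)) :
    ∀ a : Fin t → K, ∀ Δ : K, (a, Δ) ≠ (0, 0) → ∀ b : K,
      (Finset.univ.filter fun v : (Fin t → K) × K =>
          ((v.2 + Δ) ^ (t + 2) + ∑ i : Fin t, (v.1 i + a i) * (v.2 + Δ) ^ ((i : ℕ) + 1)) -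
            (v.2 ^ (t + 2) + ∑ i : Fin t, v.1 i * v.2 ^ ((i : ℕ) + 1)) = b).card ≤
        (t + 1) * Fintype.card K ^ t := by
  intro a Δ hne b
  classical
  set F : Finset ((Fin t → K) × K) := Finset.univ.filter fun v : (Fin t → K) × K =>
      ((v.2 + Δ) ^ (t + 2) + ∑ i : Fin t, (v.1 i + a i) * (v.2 + Δ) ^ ((i : ℕ) + 1)) -
        (v.2 ^ (t + 2) + ∑ i : Fin t, v.1 i * v.2 ^ ((i : ℕ) + 1)) = b with hF
  rw [Finset.card_eq_sum_card_fiberwise (f := Prod.snd) (t := (univ : Finset K))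
    (fun v _ => mem_univ _)]
  by_cases hΔ : Δ = 0
  · -- a ≠ 0 case
    have ha : a ≠ 0 := fun h => hne (by rw [h, hΔ])
    obtain ⟨j, hj⟩ := Function.ne_iff.mp ha
    simp only [Pi.zero_apply] at hj
    have hQ : ∀ v : (Fin t → K) × K, v ∈ F ↔ ∑ i : Fin t, a i * v.2 ^ ((i : ℕ) + 1) = b := by
      intro v
      rw [hF, mem_filter]
      simp only [mem_univ, true_and, hΔ, add_zero, key_id, sub_self, mul_zero,
        Finset.sum_const_zero, zero_add]
    calc ∑ x : K, (F.filter fun v => v.2 = x).card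
        ≤ ∑ x : K, (if ∑ i : Fin t, a i * x ^ ((i : ℕ) + 1) = b
            then Fintype.card K ^ t else 0) := by
          apply Finset.sum_le_sum
          intro x _
          by_cases hx : ∑ i : Fin t, a i * x ^ ((i : ℕ) + 1) = b
          · rw [if_pos hx]
            have : (F.filter fun v => v.2 = x).card ≤ (univ : Finset (Fin t → K)).card := by
              apply Finset.card_le_card_of_injOn (f := Prod.fst) (fun v _ => mem_univ _)
              intro v hv w hw hvw
              simp only [mem_coe, mem_filter] at hv hw
              exact Prod.ext hvw (hv.2.trans hw.2.symm)
            simpa [Fintype.card_fun] using this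
          · rw [if_neg hx]
            simp only [Nat.le_zero, Finset.card_eq_zero, Finset.filter_eq_empty_iff]
            intro v hvF hvx
            exact hx (by rw [← hvx]; exact (hQ v).mp hvF)
      _ = (univ.filter fun x : K => ∑ i : Fin t, a i * x ^ ((i : ℕ) + 1) = b).card
            * Fintype.card K ^ t := by
          rw [← Finset.sum_filter, Finset.sum_const, smul_eq_mul]
      _ ≤ (t + 1) * Fintype.card K ^ t :=
          Nat.mul_le_mul_right _ (root_count a j hj b)
  · -- Δ ≠ 0 case
    calc ∑ x : K, (F.filter fun v => v.2 = x).card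
        ≤ ∑ _x : K, Fintype.card K ^ (t - 1) := by
          apply Finset.sum_le_sum
          intro x _
          set c : Fin t → K := fun i => (x + Δ) ^ ((i : ℕ) + 1) - x ^ ((i : ℕ) + 1) with hcdef
          have hc0 : c ⟨0, ht⟩ ≠ 0 := by
            simp only [hcdef]
            simpa using hΔ
          set d : K := b - ((x + Δ) ^ (t + 2) - x ^ (t + 2)
            + ∑ i : Fin t, a i * (x + Δ) ^ ((i : ℕ) + 1)) with hddef
          refine le_trans ?_ (affine_count c ⟨0, ht⟩ hc0 d)
          apply Finset.card_le_card_of_injOn (f := Prod.fst)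
          · intro v hv
            simp only [mem_coe, hF, mem_filter, mem_univ, true_and] at hv
            obtain ⟨hvb, hvx⟩ := hv
            rw [hvx, key_id] at hvb
            simp only [mem_coe, mem_filter, mem_univ, true_and, hcdef, hddef]
            rw [← hvb]; ring
          · intro v hv w hw hvw
            simp only [mem_coe, mem_filter] at hv hw
            exact Prod.ext hvw (hv.2.trans hw.2.symm)
      _ = Fintype.card K * Fintype.card K ^ (t - 1) := by
          rw [Finset.sum_const, smul_eq_mul, Finset.card_univ]
      _ = Fintype.card K ^ t := by
          rw [← pow_succ']
          congr 1
          omega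
      _ ≤ (t + 1) * Fintype.card K ^ t := Nat.le_mul_of_pos_left _ (by omega)
end

section
/- Let E be the encoding of a systematic regular weak (m,n,ρ)-AMD code on A_1 × A_2 × B given by E(s) = (s, x, f_E(s,x)) with s uniform on A_1 and x uniform on A_2. Then the nonlinearity of f_E : A_1 × A_2 → B satisfies P_{f_E} ≤ max({ρ} ∪ {P_{f_{E,s'}} : s' ∈ A_1}), where f_{E,s'}(x) = f_E(s', x) : A_2 → B. -/
open Finset

/-- Derivative count `|{(s,x) : f(s+Δ₁, x+Δ₂) - f(s,x) = Δ₃}|`. -/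
def dCount {A1 A2 B : Type} [AddCommGroup A1] [Fintype A1] [AddCommGroup A2] [Fintype A2]
    [AddCommGroup B] [DecidableEq B] (f : A1 × A2 → B) (d1 : A1) (d2 : A2) (d3 : B) : ℕ :=
  (Finset.univ.filter fun p : A1 × A2 => f (p.1 + d1, p.2 + d2) - f p = d3).card

/-- Numerator of the nonlinearity of the restricted function `f_{E,s'} : A₂ → B`,
`x ↦ f(s', x)`: max over `Δ₂ ≠ 0` and `Δ₃` of `|{x : f(s',x+Δ₂) - f(s',x) = Δ₃}|`. -/
def sSup {A1 A2 B : Type} [AddCommGroup A2] [Fintype A2] [DecidableEq A2]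
    [AddCommGroup B] [Fintype B] [DecidableEq B] (f : A1 × A2 → B) (s : A1) : ℕ :=
  Finset.sup ((Finset.univ.filter fun d2 : A2 => d2 ≠ 0) ×ˢ (Finset.univ : Finset B))
    fun q => (Finset.univ.filter fun x : A2 => f (s, x + q.1) - f (s, x) = q.2).card

/-- For a systematic regular weak AMD code with encoding `E(s) = (s, x, f_E(s,x))`,
the nonlinearity of `f_E` satisfies
`P_{f_E} ≤ max {ρ} ∪ {P_{f_{E,s'}} : s' ∈ A₁}`. -/
theorem stmt_17 {A1 A2 B : Type} [AddCommGroup A1] [Fintype A1] [DecidableEq A1]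
    [Nontrivial A1] [AddCommGroup A2] [Fintype A2] [DecidableEq A2] [Nontrivial A2]
    [AddCommGroup B] [Fintype B] [DecidableEq B] (f : A1 × A2 → B) (ρ : ℚ)
    (hAMD : ∀ d1 : A1, d1 ≠ 0 → ∀ d2 : A2, ∀ d3 : B,
      (dCount f d1 d2 d3 : ℚ) / ((Fintype.card A1 : ℚ) * Fintype.card A2) ≤ ρ) :
    ∀ d1 : A1, ∀ d2 : A2, (d1, d2) ≠ (0, 0) → ∀ d3 : B,
      (dCount f d1 d2 d3 : ℚ) / ((Fintype.card A1 : ℚ) * Fintype.card A2) ≤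
        max ρ (Finset.univ.sup' Finset.univ_nonempty fun s : A1 =>
          (sSup f s : ℚ) / (Fintype.card A2 : ℚ)) := by
  intro d1 d2 hne d3
  rcases eq_or_ne d1 0 with h1 | h1
  · subst h1
    have hd2 : d2 ≠ 0 := by rintro rfl; exact hne rfl
    refine le_trans ?_ (le_max_right _ _)
    set S := Finset.univ.sup' Finset.univ_nonempty fun s : A1 =>
      (sSup f s : ℚ) / (Fintype.card A2 : ℚ) with hS
    have hc1 : (0:ℚ) < Fintype.card A1 := by exact_mod_cast Fintype.card_pos
    have hc2 : (0:ℚ) < Fintype.card A2 := by exact_mod_cast Fintype.card_pos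
    have hsum : dCount f 0 d2 d3 = ∑ s : A1,
        (Finset.univ.filter fun x : A2 => f (s, x + d2) - f (s, x) = d3).card := by
      unfold dCount
      rw [Finset.card_filter, Fintype.sum_prod_type]
      simp only [add_zero, Finset.card_filter]
    have hle : ∀ s : A1,
        ((Finset.univ.filter fun x : A2 => f (s, x + d2) - f (s, x) = d3).card : ℚ)
        ≤ S * (Fintype.card A2 : ℚ) := by
      intro s
      have h1 : (Finset.univ.filter fun x : A2 => f (s, x + d2) - f (s, x) = d3).card
          ≤ sSup f s := by
        unfold _root_.sSup
        exact Finset.le_sup (b := (d2, d3)) (f := fun q : A2 × B =>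
          (Finset.univ.filter fun x : A2 => f (s, x + q.1) - f (s, x) = q.2).card) <|
          Finset.mem_product.mpr ⟨Finset.mem_filter.mpr ⟨Finset.mem_univ _, hd2⟩,
          Finset.mem_univ _⟩
      have h2 : (sSup f s : ℚ) / (Fintype.card A2 : ℚ) ≤ S :=
        Finset.le_sup' (fun s : A1 => (sSup f s : ℚ) / (Fintype.card A2 : ℚ))
          (Finset.mem_univ s)
      calc ((Finset.univ.filter fun x : A2 => f (s, x + d2) - f (s, x) = d3).card : ℚ)
          ≤ (sSup f s : ℚ) := by exact_mod_cast h1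
        _ ≤ S * (Fintype.card A2 : ℚ) := by
            rwa [div_le_iff₀ hc2] at h2
    rw [div_le_iff₀ (by positivity), hsum]
    push_cast
    calc (∑ s : A1, ((Finset.univ.filter fun x : A2 => f (s, x + d2) - f (s, x) = d3).card : ℚ))
        ≤ ∑ _s : A1, S * (Fintype.card A2 : ℚ) := Finset.sum_le_sum fun s _ => hle s
      _ = S * ((Fintype.card A1 : ℚ) * (Fintype.card A2 : ℚ)) := by
          rw [Finset.sum_const, Finset.card_univ]; ring
  · exact le_trans (hAMD d1 h1 d2 d3) (le_max_left _ _)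
end
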